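/- The number of equivalence classes of and/or trees of size n labelled with at most k variables equals Cat(n) · Σ_{p=1}^{k} S(n,p) · 2^{2n−1−p}, where Cat(n) = (1/n)·C(2n−2, n−1) is the number of binary plane trees with n leaves. Equivalently, the number of ways to assign labels to an ordered sequence of n leaves, up to renaming of variables and global consistency of literal signs within variable classes, times the number of connective-labelled tree shapes, gives this count. -/

import Mathlib

/-- Stirling numbers of the second kind. -/
def stirling : ℕ → ℕ → ℕ
  | 0, 0 => 1
  | 0, _ + 1 => 0
  | _ + 1, 0 => 0
  | n + 1, p + 1 => (p + 1) * stirling n (p + 1) + stirling n p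

/-- Tree structures: binary plane trees whose internal nodes carry a connective (∧ or ∨,
encoded as a `Bool`) and whose leaves are unlabelled. -/
inductive Shape
  | leaf : Shape
  | node : Bool → Shape → Shape → Shape

/-- Number of leaves of a tree structure. -/
def Shape.leaves : Shape → ℕ
  | .leaf => 1
  | .node _ l r => l.leaves + r.leaves

/-- An and/or tree of size `n` labelled with (at most) `k` variables: a connective-labelled
tree structure with `n` leaves together with a labelling of its leaves (in left-to-right
order) by literals, i.e. pairs (variable, polarity). -/
structure LTree (n k : ℕ) where
  shape : Shape
  hsize : shape.leaves = n
  lab : Fin n → Fin k × Bool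

/-- Two labelled trees are equivalent if they have the same tree structure, two leaves carry
the same variable in one iff they do in the other, and two leaves carry the same literal in
one iff they do in the other. -/
def treeSetoid (n k : ℕ) : Setoid (LTree n k) where
  r t s := t.shape = s.shape ∧
    (∀ i j, (t.lab i).1 = (t.lab j).1 ↔ (s.lab i).1 = (s.lab j).1) ∧
    (∀ i j, t.lab i = t.lab j ↔ s.lab i = s.lab j)
  iseqv := ⟨fun _ => ⟨rfl, fun _ _ => Iff.rfl, fun _ _ => Iff.rfl⟩,
    fun h => ⟨h.1.symm, fun i j => (h.2.1 i j).symm, fun i j => (h.2.2 i j).symm⟩,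
    fun h1 h2 => ⟨h1.1.trans h2.1, fun i j => (h1.2.1 i j).trans (h2.2.1 i j),
      fun i j => (h1.2.2 i j).trans (h2.2.2 i j)⟩⟩

/-! ### Auxiliary development -/

deriving instance DecidableEq for Shape



lemma Shape.leaves_pos (s : Shape) : 1 ≤ s.leaves := by
  induction s with
  | leaf => simp [Shape.leaves]
  | node b l r hl hr => simp [Shape.leaves]; omega

def shapeFinset : ℕ → Finset Shape
  | 0 => ∅
  | 1 => {Shape.leaf}
  | n+2 => (Finset.range (n+1)).attach.biUnion fun i =>
      ((shapeFinset (i.1+1)) ×ˢ (shapeFinset (n+1-i.1))).biUnion fun p =>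
        {Shape.node true p.1 p.2, Shape.node false p.1 p.2}
  decreasing_by
  · have := Finset.mem_range.mp i.2; omega
  · have := Finset.mem_range.mp i.2; omega

lemma mem_shapeFinset : ∀ (n : ℕ) (s : Shape), s ∈ shapeFinset n ↔ s.leaves = n := by
  intro n
  induction n using Nat.strong_induction_on with
  | _ n ih =>
    intro s
    match n, s with
    | 0, s => simp [shapeFinset]; have := s.leaves_pos; omega
    | 1, s =>
      simp [shapeFinset]
      constructor
      · rintro rfl; rfl
      · intro h; cases s with
        | leaf => rfl
        | node b l r =>
          exfalso; have := l.leaves_pos; have := r.leaves_pos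
          simp [Shape.leaves] at h; omega
    | n+2, s =>
      simp only [shapeFinset, Finset.mem_biUnion, Finset.mem_attach, Finset.mem_product,
        Finset.mem_insert, Finset.mem_singleton, true_and, Subtype.exists, Finset.mem_range]
      constructor
      · rintro ⟨i, hi, ⟨l, r⟩, ⟨hl, hr⟩, (rfl | rfl)⟩ <;>
        · rw [ih _ (by omega) l] at hl
          rw [ih _ (by omega) r] at hr
          simp [Shape.leaves, hl, hr]; omega
      · intro h
        cases s with
        | leaf => simp [Shape.leaves] at h
        | node b l r =>
          have hl1 := l.leaves_pos; have hr1 := r.leaves_pos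
          simp only [Shape.leaves] at h
          refine ⟨l.leaves - 1, by omega, ⟨l, r⟩, ⟨?_, ?_⟩, ?_⟩
          · rw [ih _ (by omega) l]; omega
          · rw [ih _ (by omega) r]; omega
          · cases b <;> simp

lemma shapeFinset_one : shapeFinset 1 = {Shape.leaf} := by rw [shapeFinset]

lemma shapeFinset_two (n : ℕ) : shapeFinset (n+2) = (Finset.range (n+1)).attach.biUnion fun i =>
      ((shapeFinset (i.1+1)) ×ˢ (shapeFinset (n+1-i.1))).biUnion fun p =>
        {Shape.node true p.1 p.2, Shape.node false p.1 p.2} := by rw [shapeFinset]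
lemma shapeFinset_card (n : ℕ) : (shapeFinset (n+2)).card =
    ∑ i ∈ Finset.range (n+1), (shapeFinset (i+1)).card * (shapeFinset (n+1-i)).card * 2 := by
  rw [shapeFinset_two, Finset.card_biUnion, ← Finset.sum_attach (Finset.range (n+1))
    (fun i => (shapeFinset (i+1)).card * (shapeFinset (n+1-i)).card * 2)]
  · refine Finset.sum_congr rfl fun i _ => ?_
    rw [Finset.card_biUnion]
    · rw [Finset.sum_const_nat (m := 2), Finset.card_product]
      intro p _
      rw [Finset.card_insert_of_notMem (by simp), Finset.card_singleton]
    · rintro ⟨a, b⟩ hab ⟨c, d⟩ hcd hne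
      rw [Function.onFun_apply, Finset.disjoint_left]
      rintro s hs hs'
      simp only [Finset.mem_insert, Finset.mem_singleton] at hs hs'
      have h1 : ∃ u, s = Shape.node u a b := by rcases hs with rfl | rfl <;> exact ⟨_, rfl⟩
      have h2 : ∃ u, s = Shape.node u c d := by rcases hs' with rfl | rfl <;> exact ⟨_, rfl⟩
      obtain ⟨u, rfl⟩ := h1
      obtain ⟨v, h⟩ := h2
      injection h with e1 e2 e3
      exact hne (by rw [e2, e3])
  · rintro ⟨x, hx⟩ _ ⟨y, hy⟩ _ hne
    rw [Function.onFun_apply, Finset.disjoint_left]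
    rintro s hs hs'
    simp only [Finset.mem_biUnion, Finset.mem_product] at hs hs'
    obtain ⟨⟨a, b⟩, ⟨ha, hb⟩, hmem⟩ := hs
    obtain ⟨⟨c, d⟩, ⟨hc, hd⟩, hmem'⟩ := hs'
    rw [mem_shapeFinset] at ha hc
    simp only [Finset.mem_insert, Finset.mem_singleton] at hmem hmem'
    have h1 : ∃ u, s = Shape.node u a b := by rcases hmem with rfl | rfl <;> exact ⟨_, rfl⟩
    have h2 : ∃ u, s = Shape.node u c d := by rcases hmem' with rfl | rfl <;> exact ⟨_, rfl⟩
    obtain ⟨u, rfl⟩ := h1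
    obtain ⟨v, h⟩ := h2
    injection h with e1 e2 e3
    subst e2
    refine hne (Subtype.ext ?_)
    show x = y
    simp only at ha hc
    omega

lemma shapeFinset_card_eq (n : ℕ) : (shapeFinset (n+1)).card = 2^n * catalan n := by
  induction n using Nat.strong_induction_on with
  | _ n ih =>
    match n with
    | 0 => simp [shapeFinset_one]
    | m+1 =>
      rw [shapeFinset_card m]
      have : ∀ i ∈ Finset.range (m+1),
          (shapeFinset (i+1)).card * (shapeFinset (m+1-i)).card * 2
            = 2^(m+1) * (catalan i * catalan (m-i)) := by
        intro i hi
        have hi' := Finset.mem_range.mp hi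
        have h1 : (shapeFinset (i+1)).card = 2^i * catalan i := ih i (by omega)
        have h2 : m+1-i = (m-i)+1 := by omega
        have h3 : (shapeFinset (m+1-i)).card = 2^(m-i) * catalan (m-i) := by
          rw [h2]; exact ih (m-i) (by omega)
        rw [h1, h3]
        have : 2^i * 2^(m-i) * 2 = 2^(m+1) := by
          rw [← pow_add, ← pow_succ]
          congr 1; omega
        rw [← this]; ring
      rw [Finset.sum_congr rfl this, ← Finset.mul_sum, catalan_succ,
        Fin.sum_univ_eq_sum_range (fun i => catalan i * catalan (m - i))]

section Lab
variable {n k : ℕ}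

variable {n k : ℕ}

def pre (f : Fin n → Fin k × Bool) (m : ℕ) : Finset (Fin k) :=
  (Finset.univ.filter (fun j : Fin n => j.val < m)).image fun j => (f j).1

def Fresh (f : Fin n → Fin k × Bool) (i : Fin n) : Prop := ∀ j, j < i → (f j).1 ≠ (f i).1

def Canon (f : Fin n → Fin k × Bool) : Prop :=
  ∀ i, Fresh f i → ((f i).1.val = (pre f i.val).card ∧ (f i).2 = true)

def nd (f : Fin n → Fin k × Bool) : ℕ := (pre f n).card

lemma mem_pre {f : Fin n → Fin k × Bool} {m : ℕ} {v : Fin k} :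
    v ∈ pre f m ↔ ∃ j : Fin n, j.val < m ∧ (f j).1 = v := by
  simp [pre, Finset.mem_image, Finset.mem_filter]

lemma not_fresh_iff {f : Fin n → Fin k × Bool} {i : Fin n} :
    ¬ Fresh f i ↔ (f i).1 ∈ pre f i.val := by
  simp only [Fresh, mem_pre, not_forall]
  constructor
  · rintro ⟨j, hj, hne⟩; exact ⟨j, hj, not_not.mp hne⟩
  · rintro ⟨j, hj, he⟩; exact ⟨j, hj, by simp [he]⟩

lemma pre_mono {f : Fin n → Fin k × Bool} {m m' : ℕ} (h : m ≤ m') : pre f m ⊆ pre f m' := by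
  intro v hv
  rw [mem_pre] at hv ⊢
  obtain ⟨j, hj, he⟩ := hv
  exact ⟨j, by omega, he⟩

lemma pre_succ {f : Fin n → Fin k × Bool} {m : ℕ} (hm : m < n) :
    pre f (m+1) = insert (f ⟨m, hm⟩).1 (pre f m) := by
  ext v
  simp only [mem_pre, Finset.mem_insert]
  constructor
  · rintro ⟨j, hj, rfl⟩
    rcases Nat.lt_or_ge j.val m with h | h
    · exact Or.inr ⟨j, h, rfl⟩
    · have hje : j = ⟨m, hm⟩ := Fin.ext (show j.val = m by omega)
      subst hje; left; rfl
  · rintro (rfl | ⟨j, hj, rfl⟩)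
    · exact ⟨⟨m, hm⟩, by simp, rfl⟩
    · exact ⟨j, by omega, rfl⟩

lemma pre_card_le {f : Fin n → Fin k × Bool} (m : ℕ) : (pre f m).card ≤ k := by
  simpa using Finset.card_le_univ (pre f m)

lemma seg {f : Fin n → Fin k × Bool} (hf : Canon f) :
    ∀ m, m ≤ n → ∀ v ∈ pre f m, v.val < (pre f m).card := by
  intro m
  induction m with
  | zero => intro _ v hv; simp [pre] at hv
  | succ m ih =>
    intro hm v hv
    have hmn : m < n := by omega
    rw [pre_succ hmn] at hv ⊢
    by_cases hfr : Fresh f ⟨m, hmn⟩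
    · have hnotmem : (f ⟨m, hmn⟩).1 ∉ pre f m := by
        intro hmem
        exact (not_fresh_iff.mpr hmem) hfr
      rw [Finset.card_insert_of_notMem hnotmem]
      rcases Finset.mem_insert.mp hv with rfl | hv'
      · have := (hf _ hfr).1
        simp only at this
        omega
      · have := ih (by omega) v hv'; omega
    · rw [not_fresh_iff] at hfr
      have hfr' : (f ⟨m, hmn⟩).1 ∈ pre f m := hfr
      rw [Finset.insert_eq_self.mpr hfr'] at hv ⊢
      exact ih (by omega) v hv

lemma seg2 {f : Fin n → Fin k × Bool} (hf : Canon f) {m : ℕ} (hm : m ≤ n) (v : Fin k) :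
    v ∈ pre f m ↔ v.val < (pre f m).card := by
  set c := (pre f m).card with hc
  have hck : c ≤ k := pre_card_le m
  have hsub : pre f m ⊆ (Finset.range c).attachFin
      (fun x hx => lt_of_lt_of_le (Finset.mem_range.mp hx) hck) := by
    intro v hv
    rw [Finset.mem_attachFin, Finset.mem_range]
    exact seg hf m hm v hv
  have heq : pre f m = (Finset.range c).attachFin
      (fun x hx => lt_of_lt_of_le (Finset.mem_range.mp hx) hck) :=
    Finset.eq_of_subset_of_card_le hsub (by rw [Finset.card_attachFin, Finset.card_range])
  constructor
  · intro hv; exact seg hf m hm v hv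
  · intro hv; rw [heq, Finset.mem_attachFin, Finset.mem_range]; exact hv

lemma fresh_def {f : Fin n → Fin k × Bool} {i : Fin n} :
    Fresh f i ↔ ∀ j, j < i → (f j).1 ≠ (f i).1 := Iff.rfl

lemma canon_def {f : Fin n → Fin k × Bool} : Canon f ↔
    ∀ i, Fresh f i → ((f i).1.val = (pre f i.val).card ∧ (f i).2 = true) := Iff.rfl

lemma pre_def {f : Fin n → Fin k × Bool} {m : ℕ} :
    pre f m = (Finset.univ.filter (fun j : Fin n => j.val < m)).image fun j => (f j).1 := rfl
section
variable {n k : ℕ}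
end

variable {n k : ℕ}

lemma card_image_ker {α β γ : Type*} [DecidableEq β] [DecidableEq γ] (s : Finset α)
    (u : α → β) (v : α → γ)
    (h : ∀ a ∈ s, ∀ b ∈ s, u a = u b ↔ v a = v b) : (s.image u).card = (s.image v).card := by
  classical
  induction s using Finset.induction_on with
  | empty => simp
  | @insert a s ha ih =>
    rw [Finset.image_insert, Finset.image_insert]
    have h' : ∀ x ∈ s, ∀ y ∈ s, u x = u y ↔ v x = v y := fun x hx y hy =>
      h x (Finset.mem_insert_of_mem hx) y (Finset.mem_insert_of_mem hy)
    have hmem : u a ∈ s.image u ↔ v a ∈ s.image v := by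
      simp only [Finset.mem_image]
      constructor
      · rintro ⟨b, hb, he⟩
        exact ⟨b, hb, (h b (Finset.mem_insert_of_mem hb) a (Finset.mem_insert_self a s)).mp he⟩
      · rintro ⟨b, hb, he⟩
        exact ⟨b, hb, (h b (Finset.mem_insert_of_mem hb) a (Finset.mem_insert_self a s)).mpr he⟩
    by_cases hu : u a ∈ s.image u
    · rw [Finset.insert_eq_self.mpr hu, Finset.insert_eq_self.mpr (hmem.mp hu), ih h']
    · rw [Finset.card_insert_of_notMem hu,
        Finset.card_insert_of_notMem (fun hv => hu (hmem.mpr hv)), ih h']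

lemma canon_unique {f g : Fin n → Fin k × Bool} (hf : Canon f) (hg : Canon g)
    (h1 : ∀ i j, (f i).1 = (f j).1 ↔ (g i).1 = (g j).1)
    (h2 : ∀ i j, f i = f j ↔ g i = g j) : f = g := by
  have bne : ∀ a b : Bool, a ≠ b → a = !b := by decide
  have key : ∀ m, ∀ i : Fin n, i.val < m → f i = g i := by
    intro m
    induction m with
    | zero => intro i hi; omega
    | succ m ih =>
      intro i hi
      rcases Nat.lt_or_ge i.val m with hlt | hge
      · exact ih i hlt
      have him : i.val = m := by omega
      have hpre : pre f i.val = pre g i.val := by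
        rw [pre_def, pre_def]
        apply Finset.image_congr
        intro j hj
        simp only [Finset.coe_filter, Set.mem_setOf_eq, Finset.mem_filter] at hj
        show (f j).1 = (g j).1
        rw [ih j (by omega)]
      by_cases hfr : Fresh f i
      · have hfrg : Fresh g i := by
          rw [fresh_def] at hfr ⊢
          intro j hj he
          exact hfr j hj ((h1 j i).mpr he)
        have c1 := (canon_def.mp hf) i hfr
        have c2 := (canon_def.mp hg) i hfrg
        have : (f i).1 = (g i).1 := Fin.ext (by rw [c1.1, c2.1, hpre])
        exact Prod.ext this (by rw [c1.2, c2.2])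
      · rw [fresh_def] at hfr
        push_neg at hfr
        obtain ⟨j, hj, he⟩ := hfr
        have hfgj : f j = g j := ih j (by omega)
        have hgje : (g j).1 = (g i).1 := (h1 j i).mp he
        have hfst : (f i).1 = (g i).1 := by rw [← he, hfgj, hgje]
        by_cases heq : f i = f j
        · rw [heq, hfgj, (h2 i j).mp heq]
        · have hsne : (f i).2 ≠ (f j).2 := by
            intro hs
            exact heq (Prod.ext he.symm hs)
          have hgne : g i ≠ g j := fun hh => heq ((h2 i j).mpr hh)
          have hgsne : (g i).2 ≠ (g j).2 := by
            intro hs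
            exact hgne (Prod.ext hgje.symm hs)
          refine Prod.ext hfst ?_
          rw [bne _ _ hsne, bne _ _ hgsne, hfgj]
  exact funext fun i => key n i i.isLt

noncomputable def firstIdx (f : Fin n → Fin k × Bool) (i : Fin n) : Fin n :=
  (Finset.univ.filter fun j => (f j).1 = (f i).1).min' ⟨i, by simp⟩

lemma fi_spec1 (f : Fin n → Fin k × Bool) (i : Fin n) : (f (firstIdx f i)).1 = (f i).1 := by
  have := (Finset.univ.filter fun j => (f j).1 = (f i).1).min'_mem ⟨i, by simp⟩
  simpa [firstIdx] using this

lemma fi_spec2 (f : Fin n → Fin k × Bool) (i : Fin n) {j : Fin n} (h : (f j).1 = (f i).1) :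
    firstIdx f i ≤ j :=
  Finset.min'_le _ j (by simp [h])

lemma fi_fresh (f : Fin n → Fin k × Bool) (i : Fin n) : Fresh f (firstIdx f i) := by
  rw [fresh_def]
  intro j hj he
  have := fi_spec2 f i (he.trans (fi_spec1 f i))
  exact absurd hj (not_lt.mpr this)

lemma fi_congr (f : Fin n → Fin k × Bool) {i j : Fin n} (h : (f i).1 = (f j).1) :
    firstIdx f i = firstIdx f j := by
  unfold firstIdx
  congr 1
  ext x
  simp [h]

lemma fi_not_mem (f : Fin n → Fin k × Bool) (i : Fin n) :
    (f i).1 ∉ pre f (firstIdx f i).val := by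
  rw [mem_pre]
  rintro ⟨j, hj, he⟩
  have := fi_spec2 f i he
  omega

lemma rank_fi_lt_k (f : Fin n → Fin k × Bool) (i : Fin n) :
    (pre f (firstIdx f i).val).card < k := by
  have h1 : insert (f i).1 (pre f (firstIdx f i).val) ⊆ Finset.univ := Finset.subset_univ _
  have h2 := Finset.card_le_card h1
  rw [Finset.card_insert_of_notMem (fi_not_mem f i)] at h2
  simpa using h2

noncomputable def canonize (f : Fin n → Fin k × Bool) (i : Fin n) : Fin k × Bool :=
  (⟨(pre f (firstIdx f i).val).card, rank_fi_lt_k f i⟩, (f i).2 == (f (firstIdx f i)).2)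

lemma rank_lt {f : Fin n → Fin k × Bool} {a b : Fin n} (hfa : Fresh f a) (hab : a < b) :
    (pre f a.val).card < (pre f b.val).card := by
  apply Finset.card_lt_card
  rw [Finset.ssubset_iff_of_subset (pre_mono (by omega))]
  refine ⟨(f a).1, mem_pre.mpr ⟨a, hab, rfl⟩, fun hm => (not_fresh_iff.mpr hm) hfa⟩

lemma c_fst_iff (f : Fin n → Fin k × Bool) (i j : Fin n) :
    (canonize f i).1 = (canonize f j).1 ↔ (f i).1 = (f j).1 := by
  constructor
  · intro h
    have hc : (pre f (firstIdx f i).val).card = (pre f (firstIdx f j).val).card :=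
      congrArg Fin.val h
    have hij : firstIdx f i = firstIdx f j := by
      by_contra hne
      rcases lt_or_gt_of_ne hne with hlt | hlt
      · exact absurd hc (Nat.ne_of_lt (rank_lt (fi_fresh f i) hlt))
      · exact absurd hc.symm (Nat.ne_of_lt (rank_lt (fi_fresh f j) hlt))
    rw [← fi_spec1 f i, ← fi_spec1 f j, hij]
  · intro h
    simp only [canonize]
    exact Fin.ext (show (pre f (firstIdx f i).val).card = (pre f (firstIdx f j).val).card
      by rw [fi_congr f h])

lemma c_eq_iff (f : Fin n → Fin k × Bool) (i j : Fin n) :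
    canonize f i = canonize f j ↔ f i = f j := by
  have beqc : ∀ a b c : Bool, (a == c) = (b == c) → a = b := by decide
  constructor
  · intro h
    have hfst : (f i).1 = (f j).1 := (c_fst_iff f i j).mp (congrArg Prod.fst h)
    have hij : firstIdx f i = firstIdx f j := fi_congr f hfst
    have hsnd := congrArg Prod.snd h
    simp only [canonize, hij] at hsnd
    exact Prod.ext hfst (beqc _ _ _ hsnd)
  · intro h
    have hfst : (f i).1 = (f j).1 := by rw [h]
    have hij : firstIdx f i = firstIdx f j := fi_congr f hfst
    simp only [canonize, hij, h]

lemma fi_self {f : Fin n → Fin k × Bool} {i : Fin n} (hfr : Fresh f i) : firstIdx f i = i := by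
  have hle := fi_spec2 f i (rfl : (f i).1 = (f i).1)
  rcases eq_or_lt_of_le hle with he | hlt
  · exact he
  · exact absurd (fi_spec1 f i) ((fresh_def.mp hfr) _ hlt)

lemma canonize_canon (f : Fin n → Fin k × Bool) : Canon (canonize f) := by
  rw [canon_def]
  intro i hfr
  have hfrf : Fresh f i := by
    rw [fresh_def] at hfr ⊢
    intro j hj he
    exact hfr j hj ((c_fst_iff f j i).mpr he)
  have hfi : firstIdx f i = i := fi_self hfrf
  constructor
  · show (pre f (firstIdx f i).val).card = (pre (canonize f) i.val).card
    rw [hfi, pre_def, pre_def]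
    exact card_image_ker _ _ _ (fun a _ b _ => (c_fst_iff f a b).symm)
  · show ((f i).2 == (f (firstIdx f i)).2) = true
    rw [hfi, beq_self_eq_true]


/-! ### Restriction and extension of canonical labellings -/

lemma pre_init {f : Fin (n+1) → Fin k × Bool} {m : ℕ} (hm : m ≤ n) :
    pre (Fin.init f) m = pre f m := by
  ext v
  simp only [mem_pre]
  constructor
  · rintro ⟨j, hj, rfl⟩
    exact ⟨j.castSucc, by simpa using hj, rfl⟩
  · rintro ⟨j, hj, rfl⟩
    refine ⟨⟨j.val, by omega⟩, by simpa using hj, ?_⟩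
    rfl

lemma fresh_init {f : Fin (n+1) → Fin k × Bool} (j : Fin n) :
    Fresh (Fin.init f) j ↔ Fresh f j.castSucc := by
  rw [fresh_def, fresh_def]
  constructor
  · intro h j' hj' he
    have hj'n : j'.val < n := by
      have : j'.val < j.val := hj'
      omega
    refine h ⟨j'.val, hj'n⟩ hj' ?_
    show (f (Fin.castSucc ⟨j'.val, hj'n⟩)).1 = (f j.castSucc).1
    rw [show Fin.castSucc ⟨j'.val, hj'n⟩ = j' from Fin.ext (by simp)]
    exact he
  · intro h j' hj' he
    exact h j'.castSucc (by simpa using hj') he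

lemma canon_init {f : Fin (n+1) → Fin k × Bool} (hf : Canon f) : Canon (Fin.init f) := by
  rw [canon_def]
  intro i hfr
  have hfr' : Fresh f i.castSucc := (fresh_init i).mp hfr
  have := (canon_def.mp hf) i.castSucc hfr'
  constructor
  · show ((Fin.init f) i).1.val = _
    rw [show ((Fin.init f) i).1.val = (f i.castSucc).1.val from rfl, this.1,
      pre_init (by omega)]
    rfl
  · exact this.2

lemma pre_last {f : Fin (n+1) → Fin k × Bool} :
    pre f (n+1) = insert (f (Fin.last n)).1 (pre f n) := by
  rw [pre_succ (Nat.lt_succ_self n)]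
  rfl

lemma nd_init_of_not_fresh {f : Fin (n+1) → Fin k × Bool}
    (h : ¬ Fresh f (Fin.last n)) : nd (Fin.init f) = nd f := by
  have hm : (f (Fin.last n)).1 ∈ pre f n := not_fresh_iff.mp h
  unfold nd
  rw [pre_init (le_refl n), pre_last, Finset.insert_eq_self.mpr hm]

lemma nd_init_of_fresh {f : Fin (n+1) → Fin k × Bool}
    (h : Fresh f (Fin.last n)) : nd f = nd (Fin.init f) + 1 := by
  have hm : (f (Fin.last n)).1 ∉ pre f n := fun hmem => (not_fresh_iff.mpr hmem) h
  unfold nd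
  rw [pre_init (le_refl n), pre_last, Finset.card_insert_of_notMem hm]

lemma fresh_snoc_last {g : Fin n → Fin k × Bool} {x : Fin k × Bool} :
    Fresh (Fin.snoc g x) (Fin.last n) ↔ x.1 ∉ pre g n := by
  have h1 : (Fin.snoc g x : Fin (n+1) → Fin k × Bool) (Fin.last n) = x := by simp
  have h2 : pre (Fin.snoc g x) n = pre g n := by
    rw [← pre_init (f := Fin.snoc g x) (le_refl n), Fin.init_snoc]
  constructor
  · intro h hmem
    exact (not_fresh_iff.mpr (by rw [show ((Fin.last n).val) = n from rfl, h2, h1]; exact hmem)) h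
  · intro h
    by_contra hfr
    have := not_fresh_iff.mp hfr
    rw [show ((Fin.last n).val) = n from rfl, h2, h1] at this
    exact h this

lemma pre_snoc {g : Fin n → Fin k × Bool} {x : Fin k × Bool} {m : ℕ} (hm : m ≤ n) :
    pre (Fin.snoc g x : Fin (n+1) → Fin k × Bool) m = pre g m := by
  rw [← pre_init (f := Fin.snoc g x) hm, Fin.init_snoc]

lemma fresh_snoc_castSucc {g : Fin n → Fin k × Bool} {x : Fin k × Bool} (j : Fin n) :
    Fresh (Fin.snoc g x : Fin (n+1) → Fin k × Bool) j.castSucc ↔ Fresh g j := by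
  rw [← fresh_init j, Fin.init_snoc]

lemma canon_snoc {g : Fin n → Fin k × Bool} (hg : Canon g) {x : Fin k × Bool}
    (hx : x.1 ∉ pre g n → (x.1.val = (pre g n).card ∧ x.2 = true)) :
    Canon (Fin.snoc g x : Fin (n+1) → Fin k × Bool) := by
  rw [canon_def]
  intro i hfr
  induction i using Fin.lastCases with
  | last =>
    have hnm : x.1 ∉ pre g n := fresh_snoc_last.mp hfr
    have hsl : (Fin.snoc g x : Fin (n+1) → Fin k × Bool) (Fin.last n) = x := by simp
    have hp : pre (Fin.snoc g x : Fin (n+1) → Fin k × Bool) n = pre g n := pre_snoc (le_refl n)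
    obtain ⟨e1, e2⟩ := hx hnm
    constructor
    · show ((Fin.snoc g x : Fin (n+1) → Fin k × Bool) (Fin.last n)).1.val
        = (pre (Fin.snoc g x : Fin (n+1) → Fin k × Bool) n).card
      rw [hsl, hp]; exact e1
    · rw [hsl]; exact e2
  | cast j =>
    have hfr' : Fresh g j := (fresh_snoc_castSucc j).mp hfr
    obtain ⟨e1, e2⟩ := (canon_def.mp hg) j hfr'
    constructor
    · show ((Fin.snoc g x : Fin (n+1) → Fin k × Bool) j.castSucc).1.val
        = (pre (Fin.snoc g x : Fin (n+1) → Fin k × Bool) j.castSucc.val).card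
      rw [Fin.snoc_castSucc]
      have : pre (Fin.snoc g x : Fin (n+1) → Fin k × Bool) j.castSucc.val = pre g j.val := by
        have : (j.castSucc.val : ℕ) = j.val := rfl
        rw [this]
        exact pre_snoc (by omega)
      rw [this]; exact e1
    · rw [Fin.snoc_castSucc]; exact e2

lemma nd_snoc_mem {g : Fin n → Fin k × Bool} {x : Fin k × Bool} (h : x.1 ∈ pre g n) :
    nd (Fin.snoc g x : Fin (n+1) → Fin k × Bool) = nd g := by
  unfold nd
  rw [pre_last, Fin.snoc_last, pre_snoc (le_refl n), Finset.insert_eq_self.mpr h]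

lemma nd_snoc_not_mem {g : Fin n → Fin k × Bool} {x : Fin k × Bool} (h : x.1 ∉ pre g n) :
    nd (Fin.snoc g x : Fin (n+1) → Fin k × Bool) = nd g + 1 := by
  unfold nd
  rw [pre_last, Fin.snoc_last, pre_snoc (le_refl n), Finset.card_insert_of_notMem h]

end Lab

/-! ### Counting canonical labellings -/

def CanonSet (n k p : ℕ) : Type := {f : Fin n → Fin k × Bool // Canon f ∧ nd f = p}

instance (n k p : ℕ) : Finite (CanonSet n k p) := by
  unfold CanonSet; infer_instance

open scoped Classical in
noncomputable def stepEquiv (n k q : ℕ) (hq : q + 1 ≤ k) :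
    CanonSet (n+1) k (q+1) ≃ (CanonSet n k (q+1) × (Fin (q+1) × Bool)) ⊕ CanonSet n k q where
  toFun f :=
    if h : Fresh f.1 (Fin.last n) then
      .inr ⟨Fin.init f.1, canon_init f.2.1, by
        have := nd_init_of_fresh h; have := f.2.2; omega⟩
    else
      .inl ⟨⟨Fin.init f.1, canon_init f.2.1, by rw [nd_init_of_not_fresh h, f.2.2]⟩,
        ⟨⟨(f.1 (Fin.last n)).1.val, by
          have hmem : (f.1 (Fin.last n)).1 ∈ pre f.1 (n+1) :=
            mem_pre.mpr ⟨Fin.last n, by simp, rfl⟩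
          have h2 := seg f.2.1 (n+1) (le_refl _) _ hmem
          have h3 : (pre f.1 (n+1)).card = q + 1 := f.2.2
          omega⟩, (f.1 (Fin.last n)).2⟩⟩
  invFun s :=
    match s with
    | .inl ⟨⟨g, hg, hnd⟩, v, b⟩ =>
      ⟨Fin.snoc g (⟨v.val, lt_of_lt_of_le v.isLt hq⟩, b), by
        have hmem : (⟨v.val, lt_of_lt_of_le v.isLt hq⟩ : Fin k) ∈ pre g n := by
          rw [seg2 hg (le_refl n)]
          show v.val < (pre g n).card
          rw [show (pre g n).card = nd g from rfl, hnd]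
          exact v.isLt
        refine ⟨canon_snoc hg (fun hnm => absurd hmem hnm), ?_⟩
        rw [nd_snoc_mem hmem, hnd]⟩
    | .inr ⟨g, hg, hnd⟩ =>
      ⟨Fin.snoc g (⟨q, by omega⟩, true), by
        have hnm : (⟨q, by omega⟩ : Fin k) ∉ pre g n := by
          rw [seg2 hg (le_refl n)]
          show ¬ (q < (pre g n).card)
          rw [show (pre g n).card = nd g from rfl, hnd]
          omega
        refine ⟨canon_snoc hg (fun _ => ⟨?_, rfl⟩), ?_⟩
        · show q = (pre g n).card
          rw [show (pre g n).card = nd g from rfl, hnd]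
        · rw [nd_snoc_not_mem hnm, hnd]⟩
  left_inv := by
    rintro ⟨f, hf, hnd⟩
    by_cases h : Fresh f (Fin.last n)
    · simp only [dif_pos h]
      apply Subtype.ext
      show Fin.snoc (Fin.init f) _ = f
      conv_rhs => rw [← Fin.snoc_init_self f]
      have hfr := (canon_def.mp hf) (Fin.last n) h
      have h1 : nd f = nd (Fin.init f) + 1 := nd_init_of_fresh h
      have h2 : nd (Fin.init f) = (pre f n).card := by
        show (pre (Fin.init f) n).card = _
        rw [pre_init (le_refl n)]
      refine congrArg (fun x => Fin.snoc (α := fun _ : Fin (n+1) => Fin k × Bool) (Fin.init f) x)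
        (Prod.ext (Fin.ext ?_) ?_)
      · show q = (f (Fin.last n)).1.val
        have h3 : (f (Fin.last n)).1.val = (pre f n).card := hfr.1
        have h4 : nd f = q + 1 := hnd
        omega
      · exact hfr.2.symm
    · simp only [dif_neg h]
      apply Subtype.ext
      show Fin.snoc (Fin.init f) _ = f
      conv_rhs => rw [← Fin.snoc_init_self f]
  right_inv := by
    rintro (⟨⟨g, hg, hnd⟩, v, b⟩ | ⟨g, hg, hnd⟩)
    · have hmem : (⟨v.val, lt_of_lt_of_le v.isLt hq⟩ : Fin k) ∈ pre g n := by
        rw [seg2 hg (le_refl n)]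
        show v.val < (pre g n).card
        rw [show (pre g n).card = nd g from rfl, hnd]
        exact v.isLt
      have hnf : ¬ Fresh (Fin.snoc g (⟨v.val, lt_of_lt_of_le v.isLt hq⟩, b) :
          Fin (n+1) → Fin k × Bool) (Fin.last n) := by
        rw [fresh_snoc_last]
        exact fun hn => hn hmem
      simp only [dif_neg hnf]
      congr 1
      refine Prod.ext (Subtype.ext ?_) (Prod.ext (Fin.ext ?_) ?_)
      · exact Fin.init_snoc (α := fun _ : Fin (n+1) => Fin k × Bool) _ g
      · show ((Fin.snoc g (⟨v.val, lt_of_lt_of_le v.isLt hq⟩, b) :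
          Fin (n+1) → Fin k × Bool) (Fin.last n)).1.val = v.val
        rw [Fin.snoc_last]
      · show ((Fin.snoc g (⟨v.val, lt_of_lt_of_le v.isLt hq⟩, b) :
          Fin (n+1) → Fin k × Bool) (Fin.last n)).2 = b
        rw [Fin.snoc_last]
    · have hnm : (⟨q, by omega⟩ : Fin k) ∉ pre g n := by
        rw [seg2 hg (le_refl n)]
        show ¬ (q < (pre g n).card)
        rw [show (pre g n).card = nd g from rfl, hnd]
        omega
      have hfr : Fresh (Fin.snoc g (⟨q, by omega⟩, true) :
          Fin (n+1) → Fin k × Bool) (Fin.last n) := fresh_snoc_last.mpr hnm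
      simp only [dif_pos hfr]
      congr 1
      apply Subtype.ext
      exact Fin.init_snoc (α := fun _ : Fin (n+1) => Fin k × Bool) _ g

lemma stirling_zero_of_lt : ∀ n p : ℕ, n < p → stirling n p = 0 := by
  intro n
  induction n with
  | zero => intro p hp; match p, hp with | p+1, _ => rfl
  | succ n ih =>
    intro p hp
    match p, hp with
    | p+1, hp =>
      show (p + 1) * stirling n (p + 1) + stirling n p = 0
      rw [ih (p+1) (by omega), ih p (by omega)]
      simp

lemma card_canonSet_zero (k p : ℕ) :
    Nat.card (CanonSet 0 k p) = if p = 0 then 1 else 0 := by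
  have hall : ∀ f : Fin 0 → Fin k × Bool, Canon f ∧ nd f = 0 := by
    intro f
    constructor
    · rw [canon_def]; intro i; exact i.elim0
    · show (pre f 0).card = 0
      rw [pre_def]
      simp
  by_cases hp : p = 0
  · subst hp
    rw [if_pos rfl, Nat.card_eq_one_iff_unique]
    constructor
    · constructor
      rintro ⟨f, _⟩ ⟨g, _⟩
      exact Subtype.ext (funext fun i => i.elim0)
    · exact ⟨⟨fun i => i.elim0, hall _⟩⟩
  · rw [if_neg hp]
    have : IsEmpty (CanonSet 0 k p) := by
      constructor
      rintro ⟨f, hf, hnd⟩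
      exact hp (by rw [← hnd]; exact (hall f).2)
    rw [Nat.card_of_isEmpty]

lemma nd_pos {f : Fin (n+1) → Fin k × Bool} : 1 ≤ nd f := by
  have : (f 0).1 ∈ pre f (n+1) := mem_pre.mpr ⟨0, by simp, rfl⟩
  have := Finset.card_pos.mpr ⟨_, this⟩
  exact this

lemma card_canonSet (k : ℕ) : ∀ n p : ℕ, p ≤ k →
    Nat.card (CanonSet n k p) = stirling n p * 2 ^ (n - p) := by
  intro n
  induction n with
  | zero =>
    intro p _
    rw [card_canonSet_zero]
    match p with
    | 0 => rfl
    | p+1 => simp [show stirling 0 (p+1) = 0 from rfl]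
  | succ n ih =>
    intro p hp
    match p with
    | 0 =>
      have : IsEmpty (CanonSet (n+1) k 0) := by
        constructor
        rintro ⟨f, _, hnd⟩
        have := nd_pos (f := f)
        omega
      rw [Nat.card_of_isEmpty, show stirling (n+1) 0 = 0 from rfl, zero_mul]
    | q+1 =>
      rw [Nat.card_congr (stepEquiv n k q hp), Nat.card_sum, Nat.card_prod, Nat.card_prod,
        Nat.card_eq_fintype_card (α := Fin (q+1)), Fintype.card_fin,
        Nat.card_eq_fintype_card (α := Bool), Fintype.card_bool,
        ih (q+1) hp, ih q (by omega)]
      show stirling n (q+1) * 2 ^ (n - (q+1)) * ((q+1) * 2) + stirling n q * 2 ^ (n - q) =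
        ((q+1) * stirling n (q+1) + stirling n q) * 2 ^ (n+1 - (q+1))
      have hnq : n + 1 - (q + 1) = n - q := by omega
      rw [hnq]
      rcases Nat.lt_or_ge n (q+1) with hlt | hge
      · rw [stirling_zero_of_lt n (q+1) hlt]
        ring
      · have h2 : 2 ^ (n - (q+1)) * 2 = 2 ^ (n - q) := by
          rw [← pow_succ]
          congr 1
          omega
        rw [← h2]
        ring

noncomputable def canonSigmaEquiv (n k : ℕ) :
    {f : Fin n → Fin k × Bool // Canon f} ≃ Σ p : Fin (k+1), CanonSet n k p.val :=
  Equiv.trans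
    ((Equiv.sigmaFiberEquiv (fun f : {f : Fin n → Fin k × Bool // Canon f} =>
        (⟨nd f.1, Nat.lt_succ_of_le (pre_card_le (f := f.1) n)⟩ : Fin (k+1)))).symm)
    (Equiv.sigmaCongrRight fun p =>
      (Equiv.subtypeSubtypeEquivSubtypeInter
          (fun f : Fin n → Fin k × Bool => Canon f)
          (fun f : Fin n → Fin k × Bool =>
            (⟨nd f, Nat.lt_succ_of_le (pre_card_le (f := f) n)⟩ : Fin (k+1)) = p)).trans
        (Equiv.subtypeEquivRight fun f =>
          ⟨fun ⟨hc, he⟩ => ⟨hc, congrArg Fin.val he⟩,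
           fun ⟨hc, he⟩ => ⟨hc, Fin.ext he⟩⟩))

lemma card_canon (n k : ℕ) (hn : 1 ≤ n) :
    Nat.card {f : Fin n → Fin k × Bool // Canon f} =
      ∑ p ∈ Finset.Icc 1 k, stirling n p * 2 ^ (n - p) := by
  rw [Nat.card_congr (canonSigmaEquiv n k)]
  have hfin : ∀ p : Fin (k+1), Fintype (CanonSet n k p.val) := fun p => Fintype.ofFinite _
  rw [Nat.card_eq_fintype_card, Fintype.card_sigma]
  have : ∀ p : Fin (k+1), Fintype.card (CanonSet n k p.val)
      = stirling n p.val * 2 ^ (n - p.val) := by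
    intro p
    rw [← Nat.card_eq_fintype_card]
    exact card_canonSet k n p.val (by omega)
  rw [Finset.sum_congr rfl (fun p _ => this p),
    Fin.sum_univ_eq_sum_range (fun p => stirling n p * 2 ^ (n - p)) (k+1)]
  have h0 : stirling n 0 = 0 := by
    match n, hn with
    | n+1, _ => rfl
  rw [Finset.range_eq_Ico, Finset.sum_eq_sum_Ico_succ_bot (by omega), h0, zero_mul, zero_add,
    Finset.Ico_add_one_right_eq_Icc]

/-! ### The labelling setoid and its quotient -/

def labSetoid (n k : ℕ) : Setoid (Fin n → Fin k × Bool) where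
  r f g := (∀ i j, (f i).1 = (f j).1 ↔ (g i).1 = (g j).1) ∧ (∀ i j, f i = f j ↔ g i = g j)
  iseqv := ⟨fun _ => ⟨fun _ _ => Iff.rfl, fun _ _ => Iff.rfl⟩,
    fun h => ⟨fun i j => (h.1 i j).symm, fun i j => (h.2 i j).symm⟩,
    fun h1 h2 => ⟨fun i j => (h1.1 i j).trans (h2.1 i j),
      fun i j => (h1.2 i j).trans (h2.2 i j)⟩⟩

lemma canonize_resp {n k : ℕ} {f g : Fin n → Fin k × Bool} (h : (labSetoid n k).r f g) :
    canonize f = canonize g :=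
  canon_unique (canonize_canon f) (canonize_canon g)
    (fun i j => (c_fst_iff f i j).trans ((h.1 i j).trans (c_fst_iff g i j).symm))
    (fun i j => (c_eq_iff f i j).trans ((h.2 i j).trans (c_eq_iff g i j).symm))

noncomputable def labEquiv (n k : ℕ) :
    Quotient (labSetoid n k) ≃ {f : Fin n → Fin k × Bool // Canon f} where
  toFun := Quotient.lift
    (fun f => (⟨canonize f, canonize_canon f⟩ : {f : Fin n → Fin k × Bool // Canon f}))
    (fun _ _ h => Subtype.ext (canonize_resp h))
  invFun p := Quotient.mk (labSetoid n k) p.1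
  left_inv := by
    intro q
    induction q using Quotient.inductionOn with
    | h f => exact Quotient.sound ⟨fun i j => c_fst_iff f i j, fun i j => c_eq_iff f i j⟩
  right_inv := by
    rintro ⟨f, hf⟩
    exact Subtype.ext (canon_unique (canonize_canon f) hf (c_fst_iff f) (c_eq_iff f))

noncomputable def treeEquiv (n k : ℕ) :
    Quotient (treeSetoid n k) ≃ ({s : Shape // s.leaves = n} × Quotient (labSetoid n k)) where
  toFun := Quotient.lift
    (fun t : LTree n k => ((⟨t.shape, t.hsize⟩ : {s : Shape // s.leaves = n}),
      Quotient.mk (labSetoid n k) t.lab))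
    (fun a b h => by
      obtain ⟨h0, h1, h2⟩ := h
      exact Prod.ext (Subtype.ext h0) (Quotient.sound ⟨h1, h2⟩))
  invFun := fun p => Quotient.lift
    (fun lab => Quotient.mk (treeSetoid n k) (⟨p.1.1, p.1.2, lab⟩ : LTree n k))
    (fun a b h => by
      obtain ⟨h1, h2⟩ := h
      exact Quotient.sound ⟨rfl, h1, h2⟩) p.2
  left_inv := by
    intro t
    induction t using Quotient.inductionOn with
    | h t => rfl
  right_inv := by
    rintro ⟨s, q⟩
    induction q using Quotient.inductionOn with
    | h lab => rfl

/-- The number of equivalence classes of and/or trees of size `n` labelled with at most `k`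
variables equals `Cat(n) · Σ_{p=1}^{k} S(n,p) · 2^{2n−1−p}`,
where `Cat(n) = (1/n)·C(2n−2, n−1)`. -/
theorem stmt1 (n k : ℕ) (hn : 1 ≤ n) :
    Nat.card (Quotient (treeSetoid n k)) =
      (Nat.choose (2 * n - 2) (n - 1) / n) *
        ∑ p ∈ Finset.Icc 1 k, stirling n p * 2 ^ (2 * n - 1 - p) := by
  obtain ⟨m, rfl⟩ : ∃ m, n = m + 1 := ⟨n - 1, by omega⟩
  rw [Nat.card_congr (treeEquiv (m+1) k), Nat.card_prod,
    Nat.card_congr (labEquiv (m+1) k), card_canon (m+1) k (by omega)]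
  have hs : Nat.card {s : Shape // s.leaves = m+1} = 2^m * catalan m := by
    rw [Nat.card_congr (Equiv.subtypeEquivRight
        (fun s => (mem_shapeFinset (m+1) s).symm)),
      Nat.card_eq_fintype_card, Fintype.card_coe, shapeFinset_card_eq]
  rw [hs]
  have hc : catalan m = Nat.choose (2*(m+1)-2) ((m+1)-1) / (m+1) := by
    rw [catalan_eq_centralBinom_div, Nat.centralBinom]
    congr 2 <;> omega
  have hsum : ∑ p ∈ Finset.Icc 1 k, stirling (m+1) p * 2^(2*(m+1)-1-p)
      = ∑ p ∈ Finset.Icc 1 k, stirling (m+1) p * 2^(m+1-p) * 2^m := by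
    refine Finset.sum_congr rfl fun p hp => ?_
    rcases le_or_gt p (m+1) with h | h
    · rw [mul_assoc, ← pow_add]
      congr 2
      omega
    · rw [stirling_zero_of_lt (m+1) p h]
      simp
  rw [hsum, ← hc, ← Finset.sum_mul]
  ring
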